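/- If M is a matching in a graph G such that there is no augmenting path with respect to M of length at most 2k-3, then |M| ≥ ((k-1)/k)·|M_opt|, where M_opt is a maximum cardinality matching of G; i.e., M is a (k/(k-1))-approximate maximum matching. -/

import Mathlib

open Finset

/-- `M` is a matching of `G`: every edge of `M` is an edge of `G` and no two
distinct edges of `M` share an endpoint. -/
def IsMatching {V : Type*} (G : SimpleGraph V) (M : Finset (Sym2 V)) : Prop :=
  (∀ e ∈ M, e ∈ G.edgeSet) ∧ ∀ e ∈ M, ∀ f ∈ M, e ≠ f → ∀ v : V, v ∈ e → v ∉ f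

/-- A vertex is free w.r.t. `M` if it lies on no edge of `M`. -/
def IsFree {V : Type*} (M : Finset (Sym2 V)) (v : V) : Prop := ∀ e ∈ M, v ∉ e

/-- `M` is a maximum-cardinality matching of `G`. -/
def IsMaximumMatching {V : Type*} (G : SimpleGraph V) (M : Finset (Sym2 V)) : Prop :=
  IsMatching G M ∧ ∀ M' : Finset (Sym2 V), IsMatching G M' → M'.card ≤ M.card

/-- `M` is a maximal matching of `G`: it is a matching and every edge of `G`
has at least one matched endpoint. -/
def IsMaximalMatching {V : Type*} (G : SimpleGraph V) (M : Finset (Sym2 V)) : Prop :=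
  IsMatching G M ∧ ∀ e ∈ G.edgeSet, ∃ v : V, v ∈ e ∧ ¬ IsFree M v

/-- `p` is an augmenting path w.r.t. `M`: a simple path of positive length
between two free vertices whose edges alternate, starting (and hence, since the
endpoints are free, also ending) with a non-matching edge. -/
def IsAugPath {V : Type*} (G : SimpleGraph V) (M : Finset (Sym2 V)) {a b : V}
    (p : G.Walk a b) : Prop :=
  p.IsPath ∧ 0 < p.length ∧ IsFree M a ∧ IsFree M b ∧
    ∀ (i : ℕ) (h : i < p.edges.length), p.edges.get ⟨i, h⟩ ∈ M ↔ Odd i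

set_option maxHeartbeats 1000000

namespace HKaux
set_option autoImplicit false
open SimpleGraph
open scoped Classical

variable {V : Type*} {G : SimpleGraph V} {M Mopt : Finset (Sym2 V)}

def ETy (M Mopt : Finset (Sym2 V)) (b : Bool) (e : Sym2 V) : Prop :=
  if b then e ∈ M else (e ∈ Mopt ∧ e ∉ M)

def AltL (M Mopt : Finset (Sym2 V)) : Bool → List (Sym2 V) → Prop
  | _, [] => True
  | b, e :: l => ETy M Mopt b e ∧ AltL M Mopt (!b) l

def par (b : Bool) (n : ℕ) : Bool := if n % 2 = 0 then b else !b

lemma par_succ (b : Bool) (n : ℕ) : par b (n+1) = par (!b) n := by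
  rcases Nat.even_or_odd n with h | h
  · have h1 : n % 2 = 0 := Nat.even_iff.1 h
    have h2 : (n+1) % 2 = 1 := by omega
    simp [par, h1, h2]
  · have h1 : n % 2 = 1 := Nat.odd_iff.1 h
    have h2 : (n+1) % 2 = 0 := by omega
    simp [par, h1, h2]

lemma par_congr (b : Bool) {m n : ℕ} (h : m % 2 = n % 2) : par b m = par b n := by
  unfold par; rw [h]

lemma par_false_of_even {n : ℕ} (h : n % 2 = 0) : par false n = false := by simp [par, h]
lemma par_false_of_odd {n : ℕ} (h : n % 2 = 1) : par false n = true := by simp [par, h]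

lemma altL_get {b : Bool} {l : List (Sym2 V)} (h : AltL M Mopt b l) :
    ∀ i (hi : i < l.length), ETy M Mopt (par b i) (l[i]'hi) := by
  induction l generalizing b with
  | nil => intro i hi; simp at hi
  | cons e l ih =>
    intro i hi
    cases i with
    | zero => simpa [par] using h.1
    | succ i =>
      rw [par_succ]
      simpa using ih h.2 i (by simpa using hi)

lemma ety_mem_edgeSet (hM : IsMatching G M) (hO : IsMatching G Mopt) {b : Bool} {e : Sym2 V}
    (h : ETy M Mopt b e) : e ∈ G.edgeSet := by
  cases b with
  | true => exact hM.1 e h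
  | false => exact hO.1 e h.1

lemma shared_eq (hM : IsMatching G M) (hO : IsMatching G Mopt) {t : Bool} {e f : Sym2 V} {v : V}
    (he : ETy M Mopt t e) (hf : ETy M Mopt t f) (hv : v ∈ e) (hv' : v ∈ f) : e = f := by
  by_contra hne
  cases t with
  | true => exact hM.2 e he f hf hne v hv hv'
  | false => exact hO.2 e he.1 f hf.1 hne v hv hv'

lemma adj_of_ety (hM : IsMatching G M) (hO : IsMatching G Mopt) {b : Bool} {v w : V}
    (h : ETy M Mopt b (s(v, w))) : G.Adj v w := by
  apply (G.mem_edgeSet).1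
  cases b with
  | true => exact hM.1 _ h
  | false => exact hO.1 _ h.1

variable (G M Mopt) in
/-- the deterministic alternating walk -/
noncomputable def wAux (hM : IsMatching G M) (hO : IsMatching G Mopt) :
    (fuel : ℕ) → (b : Bool) → (v : V) → Σ c : V, G.Walk v c
  | 0, _, v => ⟨v, Walk.nil⟩
  | (f+1), b, v =>
    if h : ∃ w, ETy M Mopt b (s(v, w)) then
      ⟨(wAux hM hO f (!b) h.choose).1,
        Walk.cons (adj_of_ety hM hO h.choose_spec) (wAux hM hO f (!b) h.choose).2⟩
    else ⟨v, Walk.nil⟩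

variable (hM : IsMatching G M) (hO : IsMatching G Mopt)

lemma wAux_succ_pos (f : ℕ) (b : Bool) (v : V) (h : ∃ w, ETy M Mopt b (s(v, w))) :
    wAux G M Mopt hM hO (f+1) b v
      = ⟨(wAux G M Mopt hM hO f (!b) h.choose).1,
        Walk.cons (adj_of_ety hM hO h.choose_spec) (wAux G M Mopt hM hO f (!b) h.choose).2⟩ := by
  rw [wAux]
  exact dif_pos h

lemma wAux_succ_neg (f : ℕ) (b : Bool) (v : V) (h : ¬ ∃ w, ETy M Mopt b (s(v, w))) :
    wAux G M Mopt hM hO (f+1) b v = ⟨v, Walk.nil⟩ := by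
  rw [wAux]
  exact dif_neg h

lemma wAux_len_le (f : ℕ) (b : Bool) (v : V) : (wAux G M Mopt hM hO f b v).2.length ≤ f := by
  induction f generalizing b v with
  | zero => simp [wAux]
  | succ f ih =>
    by_cases h : ∃ w, ETy M Mopt b (s(v, w))
    · rw [wAux_succ_pos hM hO f b v h]
      simpa using Nat.succ_le_succ (ih _ _)
    · rw [wAux_succ_neg hM hO f b v h]
      simp

lemma wAux_alt (f : ℕ) (b : Bool) (v : V) :
    AltL M Mopt b (wAux G M Mopt hM hO f b v).2.edges := by
  induction f generalizing b v with
  | zero => simp [wAux, AltL]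
  | succ f ih =>
    by_cases h : ∃ w, ETy M Mopt b (s(v, w))
    · rw [wAux_succ_pos hM hO f b v h]
      exact ⟨h.choose_spec, ih _ _⟩
    · rw [wAux_succ_neg hM hO f b v h]
      simp [AltL]

lemma wAux_term (f : ℕ) (b : Bool) (v : V)
    (hlt : (wAux G M Mopt hM hO f b v).2.length < f) :
    ¬ ∃ w, ETy M Mopt (par b (wAux G M Mopt hM hO f b v).2.length)
        (s((wAux G M Mopt hM hO f b v).1, w)) := by
  induction f generalizing b v with
  | zero => omega
  | succ f ih =>
    by_cases h : ∃ w, ETy M Mopt b (s(v, w))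
    · rw [wAux_succ_pos hM hO f b v h] at hlt ⊢
      simp only [Walk.length_cons] at hlt ⊢
      rw [par_succ]
      exact ih (!b) h.choose (by omega)
    · rw [wAux_succ_neg hM hO f b v h]
      simpa [par] using h

lemma wAux_pos (f : ℕ) (b : Bool) (v : V)
    (h : ∃ w, ETy M Mopt b (s(v, w))) :
    0 < (wAux G M Mopt hM hO (f+1) b v).2.length := by
  rw [wAux_succ_pos hM hO f b v h]
  simp

variable (G) in
lemma support_zero {u c : V} (p : G.Walk u c) :
    p.support[0]'(by simp [Walk.length_support]) = u := by
  cases p <;> simp [Walk.support_nil, Walk.support_cons]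

variable (G) in
lemma support_last {u c : V} (p : G.Walk u c) :
    p.support[p.length]'(by simp [Walk.length_support]) = c := by
  induction p with
  | nil => simp [Walk.support_nil]
  | @cons u v w hadj q ih => simpa using ih

variable (G) in
lemma walk_edge_spec {u c : V} (p : G.Walk u c) (i : ℕ) (h : i < p.length) :
    p.edges[i]'(by simpa [Walk.length_edges] using h)
      = s(p.support[i]'(by simp [Walk.length_support]; omega),
                 p.support[i+1]'(by simp [Walk.length_support]; omega)) := by
  induction p generalizing i with
  | nil => simp at h
  | @cons u v w hadj q ih =>
    cases i with
    | zero =>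
      simp [Walk.support_cons]
    | succ i =>
      have h' : i < q.length := by simpa using h
      simpa using ih i h'

/-- Two alternating walks from `M`-free starts that agree at same-parity
positions are the same walk at the same position. -/
lemma rev_lemma (hM : IsMatching G M) (hO : IsMatching G Mopt)
    {a c a' c' : V} (p : G.Walk a c) (p' : G.Walk a' c')
    (hp : AltL M Mopt false p.edges) (hp' : AltL M Mopt false p'.edges)
    (ha : IsFree M a) (ha' : IsFree M a') :
    ∀ i i' (hi : i ≤ p.length) (hi' : i' ≤ p'.length), i % 2 = i' % 2 →
      p.support[i]'(by simp [Walk.length_support]; omega)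
        = p'.support[i']'(by simp [Walk.length_support]; omega) → a = a' ∧ i = i' := by
  intro i
  induction i using Nat.strong_induction_on with
  | _ i IH =>
  intro i' hi hi' hpar heq
  rcases Nat.eq_zero_or_pos i with rfl | hipos
  · rcases Nat.eq_zero_or_pos i' with rfl | hi'pos
    · refine ⟨?_, rfl⟩
      have h0 := support_zero G p
      have h0' := support_zero G p'
      rw [h0, h0'] at heq; exact heq
    · exfalso
      have hodd : (i' - 1) % 2 = 1 := by omega
      have hlt : i' - 1 < p'.length := by omega
      have het := altL_get hp' (i' - 1) (by simpa [Walk.length_edges] using hlt)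
      rw [par_false_of_odd hodd] at het
      have hspec := walk_edge_spec G p' (i' - 1) hlt
      have hmem : p'.support[i']'(by simp [Walk.length_support]; omega)
          ∈ p'.edges[i' - 1]'(by simpa [Walk.length_edges] using hlt) := by
        rw [hspec, Sym2.mem_iff]
        right
        congr 1
        omega
      rw [← heq, support_zero G p] at hmem
      exact ha _ het hmem
  · rcases Nat.eq_zero_or_pos i' with rfl | hi'pos
    · exfalso
      have hodd : (i - 1) % 2 = 1 := by omega
      have hlt : i - 1 < p.length := by omega
      have het := altL_get hp (i - 1) (by simpa [Walk.length_edges] using hlt)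
      rw [par_false_of_odd hodd] at het
      have hspec := walk_edge_spec G p (i - 1) hlt
      have hmem : p.support[i]'(by simp [Walk.length_support]; omega)
          ∈ p.edges[i - 1]'(by simpa [Walk.length_edges] using hlt) := by
        rw [hspec, Sym2.mem_iff]
        right
        congr 1
        omega
      rw [heq, support_zero G p'] at hmem
      exact ha' _ het hmem
    · have hlt : i - 1 < p.length := by omega
      have hlt' : i' - 1 < p'.length := by omega
      have het := altL_get hp (i - 1) (by simpa [Walk.length_edges] using hlt)
      have het' := altL_get hp' (i' - 1) (by simpa [Walk.length_edges] using hlt')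
      have hparc : par false (i - 1) = par false (i' - 1) := par_congr _ (by omega)
      rw [hparc] at het
      have hspec := walk_edge_spec G p (i - 1) hlt
      have hspec' := walk_edge_spec G p' (i' - 1) hlt'
      have hveq : p.edges[i-1]'(by simpa [Walk.length_edges] using hlt)
          = p'.edges[i'-1]'(by simpa [Walk.length_edges] using hlt') := by
        apply shared_eq hM hO het het'
          (v := p.support[i]'(by simp [Walk.length_support]; omega))
        · rw [hspec, Sym2.mem_iff]; right; congr 1; omega
        · rw [heq, hspec', Sym2.mem_iff]; right; congr 1; omega
      rw [hspec, hspec'] at hveq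
      rcases Sym2.eq_iff.1 hveq with ⟨h1, h2⟩ | ⟨h1, h2⟩
      · have hres := IH (i-1) (by omega) (i'-1) (by omega) (by omega) (by omega) h1
        exact ⟨hres.1, by omega⟩
      · exfalso
        have e1 : p'.support[i'-1+1]'(by simp [Walk.length_support]; omega)
            = p'.support[i']'(by simp [Walk.length_support]; omega) := by
          congr 1
          omega
        have hloop : p.support[i-1]'(by simp [Walk.length_support]; omega)
            = p.support[i-1+1]'(by simp [Walk.length_support]; omega) := by
          rw [h1, e1, ← heq]
          congr 1
          omega
        have hadj := adj_of_ety hM hO (hspec ▸ het)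
        exact G.ne_of_adj hadj hloop


/-- No coincidence of support vertices at odd distance in an alternating walk. -/
lemma no_odd (hM : IsMatching G M) (hO : IsMatching G Mopt)
    {a c : V} (p : G.Walk a c) (hp : AltL M Mopt false p.edges) :
    ∀ d (hd : d % 2 = 1) (i j : ℕ) (hij : j = i + d) (hjl : j ≤ p.length),
      p.support[i]'(by simp [Walk.length_support]; omega)
        = p.support[j]'(by simp [Walk.length_support]; omega) → False := by
  intro d
  induction d using Nat.strong_induction_on with
  | _ d IH =>
  intro hd i j hj hjle hcoin
  have hlti : i < p.length := by omega
  have hltj : j - 1 < p.length := by omega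
  have hei := altL_get hp i (by simpa [Walk.length_edges] using hlti)
  have hej := altL_get hp (j-1) (by simpa [Walk.length_edges] using hltj)
  have hparc : par false (j - 1) = par false i := par_congr _ (by omega)
  rw [hparc] at hej
  have hspeci := walk_edge_spec G p i hlti
  have hspecj := walk_edge_spec G p (j-1) hltj
  have hveq : p.edges[i]'(by simpa [Walk.length_edges] using hlti)
      = p.edges[j-1]'(by simpa [Walk.length_edges] using hltj) := by
    apply shared_eq hM hO hei hej
      (v := p.support[i]'(by simp [Walk.length_support]; omega))
    · rw [hspeci, Sym2.mem_iff]; left; rfl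
    · rw [hspecj, Sym2.mem_iff]; right; rw [hcoin]; congr 1; omega
  rw [hspeci, hspecj] at hveq
  rcases Sym2.eq_iff.1 hveq with ⟨h1, h2⟩ | ⟨h1, h2⟩
  · -- supp i = supp (j-1): edge (j-1) is a loop
    have hloop : p.support[j-1]'(by simp [Walk.length_support]; omega)
        = p.support[j-1+1]'(by simp [Walk.length_support]; omega) := by
      rw [← h1, hcoin]
      congr 1
      omega
    have hadj := adj_of_ety hM hO (hspecj ▸ hej)
    exact G.ne_of_adj hadj hloop
  · rcases Nat.lt_or_ge d 3 with hd3 | hd3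
    · -- d = 1 : edge i is a loop
      have hd1 : d = 1 := by omega
      have hloop : p.support[i]'(by simp [Walk.length_support]; omega)
          = p.support[i+1]'(by simp [Walk.length_support]; omega) := by
        rw [h2]
        congr 1
        omega
      have hadj := adj_of_ety hM hO (hspeci ▸ hei)
      exact G.ne_of_adj hadj hloop
    · -- descend
      exact IH (d-2) (by omega) (by omega) (i+1) (j-1) (by omega) (by omega) h2

lemma alt_nodup (hM : IsMatching G M) (hO : IsMatching G Mopt)
    {a c : V} (p : G.Walk a c) (hp : AltL M Mopt false p.edges) (ha : IsFree M a) :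
    p.support.Nodup := by
  rw [List.nodup_iff_injective_get]
  rintro ⟨i, hi⟩ ⟨j, hj⟩ h
  simp only [List.get_eq_getElem] at h
  have hi' : i ≤ p.length := by simp [Walk.length_support] at hi; omega
  have hj' : j ≤ p.length := by simp [Walk.length_support] at hj; omega
  rcases Nat.lt_trichotomy i j with hlt | heq | hgt
  · exfalso
    rcases Nat.even_or_odd (j - i) with hpar | hpar
    · have := rev_lemma hM hO p p hp hp ha ha i j hi' hj'
        (by rw [Nat.even_iff] at hpar; omega) h
      omega
    · exact no_odd hM hO p hp (j - i) (Nat.odd_iff.1 hpar) i j (by omega) hj' h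
  · simp [heq]
  · exfalso
    rcases Nat.even_or_odd (i - j) with hpar | hpar
    · have := rev_lemma hM hO p p hp hp ha ha i j hi' hj'
        (by rw [Nat.even_iff] at hpar; omega) h
      omega
    · exact no_odd hM hO p hp (i - j) (Nat.odd_iff.1 hpar) j i (by omega) hi' h.symm


variable (M) in
noncomputable def cov : Finset V :=
  M.biUnion (fun e => {(Quot.out e).1, (Quot.out e).2})

lemma mem_cov {v : V} : v ∈ cov M ↔ ∃ e ∈ M, v ∈ e := by
  simp only [cov, Finset.mem_biUnion, Finset.mem_insert, Finset.mem_singleton]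
  constructor
  · rintro ⟨e, he, h | h⟩
    · exact ⟨e, he, h ▸ Sym2.out_fst_mem e⟩
    · exact ⟨e, he, h ▸ Sym2.out_snd_mem e⟩
  · rintro ⟨e, he, h⟩
    refine ⟨e, he, ?_⟩
    have : Sym2.mk (Quot.out e).1 (Quot.out e).2 = e := Quot.out_eq e
    rw [← this, Sym2.mem_iff] at h
    exact h

lemma free_iff_cov {v : V} : IsFree M v ↔ v ∉ cov M := by
  rw [mem_cov]
  constructor
  · rintro h ⟨e, he, hv⟩; exact h e he hv
  · intro h e he hv; exact h ⟨e, he, hv⟩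

variable (G) in
lemma card_cov (hM : IsMatching G M) : (cov M).card = 2 * M.card := by
  rw [cov, Finset.card_biUnion]
  · rw [Finset.sum_congr rfl (g := fun _ => 2), Finset.sum_const, smul_eq_mul, Nat.mul_comm]
    intro e he
    have hd : ¬ e.IsDiag := G.not_isDiag_of_mem_edgeSet (hM.1 e he)
    have : (Quot.out e).1 ≠ (Quot.out e).2 := by
      intro h
      apply hd
      have h2 : Sym2.mk (Quot.out e).1 (Quot.out e).2 = e := Quot.out_eq e
      rw [← h2, Sym2.mk_isDiag_iff]
      exact h
    rw [Finset.card_insert_of_notMem (by simpa using this), Finset.card_singleton]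
  · intro e he f hf hne
    simp only [Finset.disjoint_left, Finset.mem_insert, Finset.mem_singleton]
    intro v hv hv'
    have hve : v ∈ e := by
      have h2 : Sym2.mk (Quot.out e).1 (Quot.out e).2 = e := Quot.out_eq e
      rw [← h2, Sym2.mem_iff]; exact hv
    have hvf : v ∈ f := by
      have h2 : Sym2.mk (Quot.out f).1 (Quot.out f).2 = f := Quot.out_eq f
      rw [← h2, Sym2.mem_iff]; exact hv'
    exact hM.2 e he f hf hne v hve hvf

lemma altL_mem {b : Bool} {l : List (Sym2 V)} (h : AltL M Mopt b l) :
    ∀ e ∈ l, e ∈ M ∪ Mopt := by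
  induction l generalizing b with
  | nil => simp
  | cons e l ih =>
    intro f hf
    rcases List.mem_cons.1 hf with rfl | hf
    · have h1 := h.1
      cases b with
      | true => exact Finset.mem_union_left _ h1
      | false => exact Finset.mem_union_right _ h1.1
    · exact ih h.2 f hf


variable (G M Mopt) in
noncomputable def PW (hM : IsMatching G M) (hO : IsMatching G Mopt) (a : V) :
    Σ c : V, G.Walk a c :=
  wAux G M Mopt hM hO ((M ∪ Mopt).card + 1) false a

lemma PW_alt (a : V) : AltL M Mopt false (PW G M Mopt hM hO a).2.edges :=
  wAux_alt hM hO _ _ _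

lemma PW_nodup (a : V) (ha : IsFree M a) : (PW G M Mopt hM hO a).2.support.Nodup :=
  alt_nodup hM hO _ (PW_alt hM hO a) ha

lemma PW_isPath (a : V) (ha : IsFree M a) : (PW G M Mopt hM hO a).2.IsPath :=
  (SimpleGraph.Walk.isPath_def _).2 (PW_nodup hM hO a ha)

lemma PW_len_lt (a : V) (ha : IsFree M a) :
    (PW G M Mopt hM hO a).2.length < (M ∪ Mopt).card + 1 := by
  have hnd : (PW G M Mopt hM hO a).2.edges.Nodup := (PW_isPath hM hO a ha).edges_nodup
  have hsub : (PW G M Mopt hM hO a).2.edges.toFinset ⊆ M ∪ Mopt := by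
    intro e he
    exact altL_mem (PW_alt hM hO a) e (List.mem_toFinset.1 he)
  have := Finset.card_le_card hsub
  rw [List.toFinset_card_of_nodup hnd, SimpleGraph.Walk.length_edges] at this
  omega

lemma PW_term (a : V) (ha : IsFree M a) :
    ¬ ∃ w, ETy M Mopt (par false (PW G M Mopt hM hO a).2.length)
        (s((PW G M Mopt hM hO a).1, w)) :=
  wAux_term hM hO _ _ _ (PW_len_lt hM hO a ha)

lemma PW_pos (a : V) (h : ∃ w, ETy M Mopt false (s(a, w))) :
    0 < (PW G M Mopt hM hO a).2.length :=
  wAux_pos hM hO _ _ _ h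

lemma pos_of_mem_edge {a c : V} (p : G.Walk a c) {f : Sym2 V} {x : V}
    (hf : f ∈ p.edges) (hx : x ∈ f) :
    ∃ j, ∃ (hj : j ≤ p.length), p.support[j]'(by simp [SimpleGraph.Walk.length_support]; omega) = x := by
  obtain ⟨r, hr, hrf⟩ := List.mem_iff_getElem.1 hf
  have hr' : r < p.length := by simpa [SimpleGraph.Walk.length_edges] using hr
  have hspec := walk_edge_spec G p r hr'
  rw [hspec] at hrf
  rw [← hrf, Sym2.mem_iff] at hx
  rcases hx with h | h
  · exact ⟨r, by omega, h.symm⟩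
  · exact ⟨r+1, by omega, h.symm⟩

end HKaux

open HKaux in
/-- Hopcroft–Karp: if a matching has no augmenting path of length at most
`2k-3`, then it is a `k/(k-1)`-approximate maximum matching. -/
theorem no_short_aug_path_approx {V : Type*} (G : SimpleGraph V)
    (M Mopt : Finset (Sym2 V)) (k : ℕ) (hk : 2 ≤ k)
    (hM : IsMatching G M) (hopt : IsMaximumMatching G Mopt)
    (hno : ∀ (a b : V) (p : G.Walk a b), IsAugPath G M p → 2 * k - 3 < p.length) :
    (k - 1) * Mopt.card ≤ k * M.card := by
  obtain ⟨hO, -⟩ := hopt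
  classical
  set A : Finset V := cov Mopt \ cov M with hAdef
  set B : Finset V := cov M \ cov Mopt with hBdef
  have hAcard : A.card + (cov Mopt ∩ cov M).card = 2 * Mopt.card := by
    rw [hAdef, Finset.card_sdiff_add_card_inter, card_cov G hO]
  have hBcard : B.card + (cov M ∩ cov Mopt).card = 2 * M.card := by
    rw [hBdef, Finset.card_sdiff_add_card_inter, card_cov G hM]
  have hinter : (cov M ∩ cov Mopt).card = (cov Mopt ∩ cov M).card := by
    rw [Finset.inter_comm]
  have hfree : ∀ a ∈ A, IsFree M a := by
    intro a ha
    exact free_iff_cov.2 (Finset.mem_sdiff.1 ha).2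
  have hex : ∀ a ∈ A, ∃ w, ETy M Mopt false (s(a, w)) := by
    intro a ha
    obtain ⟨e, he, hv⟩ := mem_cov.1 (Finset.mem_sdiff.1 ha).1
    have henM : e ∉ M := fun hc => (Finset.mem_sdiff.1 ha).2 (mem_cov.2 ⟨e, hc, hv⟩)
    refine ⟨Sym2.Mem.other hv, ?_⟩
    have hs : s(a, Sym2.Mem.other hv) = e := Sym2.other_spec hv
    rw [show ETy M Mopt false (s(a, Sym2.Mem.other hv))
        = (s(a, Sym2.Mem.other hv) ∈ Mopt ∧ s(a, Sym2.Mem.other hv) ∉ M) from rfl, hs]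
    exact ⟨he, henM⟩
  have hpos : ∀ a ∈ A, 0 < (PW G M Mopt hM hO a).2.length := by
    intro a ha
    exact PW_pos hM hO a (hex a ha)
  set Aodd : Finset V := A.filter (fun a => (PW G M Mopt hM hO a).2.length % 2 = 1) with hAodd
  set Aeven : Finset V := A.filter (fun a => ¬ (PW G M Mopt hM hO a).2.length % 2 = 1) with hAeven
  have hsplit : Aodd.card + Aeven.card = A.card := by
    rw [hAodd, hAeven, Finset.card_filter_add_card_filter_not]
  -- endpoints of odd walks are free
  have hfree_end : ∀ a ∈ Aodd, IsFree M (PW G M Mopt hM hO a).1 := by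
    intro a ha
    obtain ⟨haA, hodd⟩ := Finset.mem_filter.1 ha
    have hterm := PW_term hM hO a (hfree a haA)
    rw [par_false_of_odd hodd] at hterm
    intro e he hv
    exact hterm ⟨Sym2.Mem.other hv, by
      rw [show ETy M Mopt true (s((PW G M Mopt hM hO a).1, Sym2.Mem.other hv))
          = (s((PW G M Mopt hM hO a).1, Sym2.Mem.other hv) ∈ M) from rfl,
        Sym2.other_spec hv]
      exact he⟩
  have haug : ∀ a ∈ Aodd, IsAugPath G M (PW G M Mopt hM hO a).2 := by
    intro a ha
    obtain ⟨haA, hodd⟩ := Finset.mem_filter.1 ha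
    refine ⟨PW_isPath hM hO a (hfree a haA), hpos a haA, hfree a haA, hfree_end a ha, ?_⟩
    intro i h
    have het := altL_get (PW_alt hM hO a) i h
    rw [List.get_eq_getElem]
    rcases Nat.even_or_odd i with hpar | hpar
    · rw [par_false_of_even (Nat.even_iff.1 hpar)] at het
      simp only [Nat.odd_iff, Nat.even_iff.1 hpar]
      constructor
      · intro hc; exact absurd hc het.2
      · omega
    · rw [par_false_of_odd (Nat.odd_iff.1 hpar)] at het
      exact ⟨fun _ => hpar, fun _ => het⟩
  have hlen : ∀ a ∈ Aodd, 2 * k - 1 ≤ (PW G M Mopt hM hO a).2.length := by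
    intro a ha
    obtain ⟨haA, hodd⟩ := Finset.mem_filter.1 ha
    have := hno a _ _ (haug a ha)
    omega
  -- KEY 1 : card Aeven ≤ card B
  have hkey1 : Aeven.card ≤ B.card := by
    apply Finset.card_le_card_of_injOn (fun a => (PW G M Mopt hM hO a).1)
    · intro a ha
      obtain ⟨haA, hnodd⟩ := Finset.mem_filter.1 ha
      have hLpos := hpos a haA
      have hL2 : 2 ≤ (PW G M Mopt hM hO a).2.length := by omega
      have hlast := support_last G (PW G M Mopt hM hO a).2
      have hlt : (PW G M Mopt hM hO a).2.length - 1 < (PW G M Mopt hM hO a).2.length := by omega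
      have het := altL_get (PW_alt hM hO a) ((PW G M Mopt hM hO a).2.length - 1)
        (by simpa [SimpleGraph.Walk.length_edges] using hlt)
      rw [par_false_of_odd (by omega)] at het
      have hspec := walk_edge_spec G (PW G M Mopt hM hO a).2 ((PW G M Mopt hM hO a).2.length - 1) hlt
      have hmem : (PW G M Mopt hM hO a).1
          ∈ (PW G M Mopt hM hO a).2.edges[(PW G M Mopt hM hO a).2.length - 1]'(by
              simpa [SimpleGraph.Walk.length_edges] using hlt) := by
        rw [hspec, Sym2.mem_iff]
        right
        have e1 : (PW G M Mopt hM hO a).2.support[(PW G M Mopt hM hO a).2.length - 1 + 1]'(by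
              simp [SimpleGraph.Walk.length_support]; omega)
            = (PW G M Mopt hM hO a).2.support[(PW G M Mopt hM hO a).2.length]'(by
              simp [SimpleGraph.Walk.length_support]) := by
          congr 1
          omega
        rw [e1, hlast]
      refine Finset.mem_sdiff.2 ⟨mem_cov.2 ⟨_, het, hmem⟩, ?_⟩
      intro hc
      obtain ⟨f, hfo, hvf⟩ := mem_cov.1 hc
      by_cases hfM : f ∈ M
      · -- f coincides with the last edge, which then lies in Mopt too : contradiction
        have hef : (PW G M Mopt hM hO a).2.edges[(PW G M Mopt hM hO a).2.length - 1]'(by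
              simpa [SimpleGraph.Walk.length_edges] using hlt) = f :=
          shared_eq hM hO (t := true) het hfM hmem hvf
        have hlt2 : (PW G M Mopt hM hO a).2.length - 2 < (PW G M Mopt hM hO a).2.length := by omega
        have het2 := altL_get (PW_alt hM hO a) ((PW G M Mopt hM hO a).2.length - 2)
          (by simpa [SimpleGraph.Walk.length_edges] using hlt2)
        rw [par_false_of_even (by omega)] at het2
        have hspec2 := walk_edge_spec G (PW G M Mopt hM hO a).2
          ((PW G M Mopt hM hO a).2.length - 2) hlt2
        -- the two edges share the vertex at position L-1
        have hv1 : (PW G M Mopt hM hO a).2.support[(PW G M Mopt hM hO a).2.length - 1]'(by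
              simp [SimpleGraph.Walk.length_support])
            ∈ (PW G M Mopt hM hO a).2.edges[(PW G M Mopt hM hO a).2.length - 1]'(by
              simpa [SimpleGraph.Walk.length_edges] using hlt) := by
          rw [hspec, Sym2.mem_iff]; left; rfl
        have hv2 : (PW G M Mopt hM hO a).2.support[(PW G M Mopt hM hO a).2.length - 1]'(by
              simp [SimpleGraph.Walk.length_support])
            ∈ (PW G M Mopt hM hO a).2.edges[(PW G M Mopt hM hO a).2.length - 2]'(by
              simpa [SimpleGraph.Walk.length_edges] using hlt2) := by
          rw [hspec2, Sym2.mem_iff]; right; congr 1; omega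
        have hne : (PW G M Mopt hM hO a).2.edges[(PW G M Mopt hM hO a).2.length - 1]'(by
              simpa [SimpleGraph.Walk.length_edges] using hlt)
            ≠ (PW G M Mopt hM hO a).2.edges[(PW G M Mopt hM hO a).2.length - 2]'(by
              simpa [SimpleGraph.Walk.length_edges] using hlt2) := by
          intro hcc
          exact het2.2 (hcc ▸ het)
        exact hO.2 _ (hef ▸ hfo) _ het2.1 hne _ hv1 hv2
      · -- f would extend the walk
        have hterm := PW_term hM hO a (hfree a haA)
        rw [par_false_of_even (by omega)] at hterm
        exact hterm ⟨Sym2.Mem.other hvf, by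
          rw [show ETy M Mopt false (s((PW G M Mopt hM hO a).1, Sym2.Mem.other hvf))
              = (s((PW G M Mopt hM hO a).1, Sym2.Mem.other hvf) ∈ Mopt
                  ∧ s((PW G M Mopt hM hO a).1, Sym2.Mem.other hvf) ∉ M) from rfl,
            Sym2.other_spec hvf]
          exact ⟨hfo, hfM⟩⟩
    · intro a ha a' ha' h
      obtain ⟨haA, hnodd⟩ := Finset.mem_filter.1 ha
      obtain ⟨haA', hnodd'⟩ := Finset.mem_filter.1 ha'
      have := rev_lemma hM hO (PW G M Mopt hM hO a).2 (PW G M Mopt hM hO a').2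
        (PW_alt hM hO a) (PW_alt hM hO a') (hfree a haA) (hfree a' haA')
        (PW G M Mopt hM hO a).2.length (PW G M Mopt hM hO a').2.length
        le_rfl le_rfl (by omega)
        (by rw [support_last, support_last]; exact h)
      exact this.1
  -- KEY 2 : (k-1) * card Aodd ≤ 2 * card M
  have hSa : ∀ a ∈ Aodd,
      k - 1 ≤ (M.filter (fun f => f ∈ (PW G M Mopt hM hO a).2.edges)).card := by
    intro a ha
    obtain ⟨haA, hodd⟩ := Finset.mem_filter.1 ha
    have hL := hlen a ha
    have hnd : (PW G M Mopt hM hO a).2.edges.Nodup := (PW_isPath hM hO a (hfree a haA)).edges_nodup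
    have hcard := Finset.card_le_card_of_injOn
      (f := fun i => (PW G M Mopt hM hO a).2.edges.getD (2*i+1) (s(a,a)))
      (s := Finset.range (k-1))
      (t := M.filter (fun f => f ∈ (PW G M Mopt hM hO a).2.edges)) ?_ ?_
    · simpa using hcard
    · intro i hi
      have hir : i < k - 1 := Finset.mem_range.1 hi
      have hbd : 2*i+1 < (PW G M Mopt hM hO a).2.edges.length := by
        rw [SimpleGraph.Walk.length_edges]; omega
      dsimp only
      rw [List.getD_eq_getElem _ _ hbd]
      refine Finset.mem_filter.2 ⟨?_, List.getElem_mem hbd⟩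
      have het := altL_get (PW_alt hM hO a) (2*i+1) hbd
      rw [par_false_of_odd (by omega)] at het
      exact het
    · intro i hi i' hi' h
      have hbd : 2*i+1 < (PW G M Mopt hM hO a).2.edges.length := by
        rw [SimpleGraph.Walk.length_edges]; have := Finset.mem_range.1 hi; omega
      have hbd' : 2*i'+1 < (PW G M Mopt hM hO a).2.edges.length := by
        rw [SimpleGraph.Walk.length_edges]; have := Finset.mem_range.1 hi'; omega
      dsimp only at h
      rw [List.getD_eq_getElem _ _ hbd, List.getD_eq_getElem _ _ hbd'] at h
      have := List.nodup_iff_injective_get.1 hnd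
        (a₁ := ⟨2*i+1, hbd⟩) (a₂ := ⟨2*i'+1, hbd'⟩) (by simpa [List.get_eq_getElem] using h)
      simp only [Fin.mk.injEq] at this
      omega
  have hfib : ∀ f ∈ M, (Aodd.filter (fun a => f ∈ (PW G M Mopt hM hO a).2.edges)).card ≤ 2 := by
    intro f hf
    by_contra hc
    push_neg at hc
    obtain ⟨a1, h1, a2, h2, a3, h3, hne12, hne13, hne23⟩ := Finset.two_lt_card.1 hc
    have hx : f.out.1 ∈ f := Sym2.out_fst_mem f
    have hget : ∀ a ∈ Aodd.filter (fun a => f ∈ (PW G M Mopt hM hO a).2.edges),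
        ∃ j, ∃ (hj : j ≤ (PW G M Mopt hM hO a).2.length),
          (PW G M Mopt hM hO a).2.support[j]'(by
            simp [SimpleGraph.Walk.length_support]; omega) = f.out.1 := by
      intro a ha
      exact pos_of_mem_edge (PW G M Mopt hM hO a).2 (Finset.mem_filter.1 ha).2 hx
    obtain ⟨j1, hj1, he1⟩ := hget a1 h1
    obtain ⟨j2, hj2, he2⟩ := hget a2 h2
    obtain ⟨j3, hj3, he3⟩ := hget a3 h3
    have hA1 : a1 ∈ A := (Finset.mem_filter.1 (Finset.mem_filter.1 h1).1).1
    have hA2 : a2 ∈ A := (Finset.mem_filter.1 (Finset.mem_filter.1 h2).1).1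
    have hA3 : a3 ∈ A := (Finset.mem_filter.1 (Finset.mem_filter.1 h3).1).1
    have hcases : j1 % 2 = j2 % 2 ∨ j1 % 2 = j3 % 2 ∨ j2 % 2 = j3 % 2 := by omega
    rcases hcases with hp | hp | hp
    · exact hne12 (rev_lemma hM hO _ _ (PW_alt hM hO a1) (PW_alt hM hO a2)
        (hfree a1 hA1) (hfree a2 hA2) j1 j2 hj1 hj2 hp (by rw [he1, he2])).1
    · exact hne13 (rev_lemma hM hO _ _ (PW_alt hM hO a1) (PW_alt hM hO a3)
        (hfree a1 hA1) (hfree a3 hA3) j1 j3 hj1 hj3 hp (by rw [he1, he3])).1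
    · exact hne23 (rev_lemma hM hO _ _ (PW_alt hM hO a2) (PW_alt hM hO a3)
        (hfree a2 hA2) (hfree a3 hA3) j2 j3 hj2 hj3 hp (by rw [he2, he3])).1
  have hkey2 : (k - 1) * Aodd.card ≤ 2 * M.card := by
    have h1 : (k-1) * Aodd.card ≤ ∑ a ∈ Aodd,
        (M.filter (fun f => f ∈ (PW G M Mopt hM hO a).2.edges)).card := by
      calc (k-1) * Aodd.card = ∑ _a ∈ Aodd, (k-1) := by
            rw [Finset.sum_const, smul_eq_mul, Nat.mul_comm]
        _ ≤ _ := Finset.sum_le_sum hSa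
    have h2 : ∑ a ∈ Aodd, (M.filter (fun f => f ∈ (PW G M Mopt hM hO a).2.edges)).card
        = ∑ f ∈ M, (Aodd.filter (fun a => f ∈ (PW G M Mopt hM hO a).2.edges)).card := by
      simp_rw [Finset.card_filter]
      rw [Finset.sum_comm]
    have h3 : ∑ f ∈ M, (Aodd.filter (fun a => f ∈ (PW G M Mopt hM hO a).2.edges)).card
        ≤ 2 * M.card := by
      calc _ ≤ ∑ _f ∈ M, 2 := Finset.sum_le_sum hfib
        _ = 2 * M.card := by rw [Finset.sum_const, smul_eq_mul, Nat.mul_comm]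
    omega
  -- final arithmetic
  have hfin1 : 2 * Mopt.card ≤ Aodd.card + 2 * M.card := by omega
  have hfin2 : (k-1) * (2 * Mopt.card) ≤ (k-1) * (Aodd.card + 2 * M.card) :=
    Nat.mul_le_mul_left _ hfin1
  have hfin3 : (k-1) * (Aodd.card + 2 * M.card) = (k-1) * Aodd.card + (k-1) * (2 * M.card) := by
    ring
  have hfin4 : (k-1) * (2 * Mopt.card) ≤ 2 * M.card + (k-1) * (2 * M.card) := by omega
  have hfin5 : 2 * M.card + (k-1) * (2 * M.card) = 2 * (k * M.card) := by
    have : k - 1 + 1 = k := by omega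
    calc 2 * M.card + (k-1) * (2 * M.card) = ((k-1) + 1) * (2 * M.card) := by ring
      _ = k * (2 * M.card) := by rw [this]
      _ = 2 * (k * M.card) := by ring
  have hfin6 : 2 * ((k-1) * Mopt.card) ≤ 2 * (k * M.card) := by
    calc 2 * ((k-1) * Mopt.card) = (k-1) * (2 * Mopt.card) := by ring
      _ ≤ 2 * M.card + (k-1) * (2 * M.card) := hfin4
      _ = 2 * (k * M.card) := hfin5
  omega
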